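/- Let T ∈ 𝕋, i.e., T is a tree with at least one non-pendant vertex in which every non-pendant vertex is adjacent to some pendant vertex. Then every alternating path in T with respect to any maximum matching has length at most three. -/
import Mathlib


open SimpleGraph

/-- `X` is the group inverse of `A`. -/
def IsGroupInverse {n : Type*} [Fintype n] (A X : Matrix n n ℝ) : Prop :=
  A * X * A = A ∧ X * A * X = X ∧ A * X = X * A

/-- A matching of a graph: a set of pairwise non-incident edges. -/
def IsMatching {V : Type*} (G : SimpleGraph V) (M : Finset (Sym2 V)) : Prop :=
  (↑M : Set (Sym2 V)) ⊆ G.edgeSet ∧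
    ∀ e ∈ M, ∀ f ∈ M, e ≠ f → ∀ v : V, ¬(v ∈ e ∧ v ∈ f)

/-- A maximum matching: a matching of maximum cardinality. -/
def IsMaxMatching {V : Type*} (G : SimpleGraph V) (M : Finset (Sym2 V)) : Prop :=
  IsMatching G M ∧ ∀ N : Finset (Sym2 V), IsMatching G N → N.card ≤ M.card

/-- A nonempty list of edges alternately in and out of `M`,
beginning and ending with edges of `M`. -/
def IsAltEdgeList {V : Type*} (M : Set (Sym2 V)) : List (Sym2 V) → Prop
  | [] => False
  | [e] => e ∈ M
  | e :: f :: rest => e ∈ M ∧ f ∉ M ∧ IsAltEdgeList M rest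

/-- A pair of vertices is maximally matchable if they are joined by a path that is
alternating with respect to some maximum matching. -/
def MaxMatchable {V : Type*} (G : SimpleGraph V) (u v : V) : Prop :=
  ∃ (p : G.Walk u v) (M : Finset (Sym2 V)),
    p.IsPath ∧ IsMaxMatching G M ∧ IsAltEdgeList (↑M) p.edges

/-- `G` is a star: some center `c` is adjacent to exactly the other vertices,
and there are no other edges. -/
def IsStar {V : Type*} (G : SimpleGraph V) : Prop :=
  ∃ c : V, ∀ u v : V, G.Adj u v ↔ ((u = c ∧ v ≠ c) ∨ (v = c ∧ u ≠ c))

/-- The class 𝕋: trees with at least one non-pendant vertex in which every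
non-pendant vertex is adjacent to a pendant vertex. -/
def InClassT {V : Type*} [Fintype V] (T : SimpleGraph V) [DecidableRel T.Adj] : Prop :=
  T.IsTree ∧ (∃ v, T.degree v ≠ 1) ∧
    ∀ v, T.degree v ≠ 1 → ∃ u, T.Adj v u ∧ T.degree u = 1

/-- The number of pendant neighbours of `v`. -/
def pendantNbrs {V : Type*} [Fintype V] [DecidableEq V] (T : SimpleGraph V)
    [DecidableRel T.Adj] (v : V) : ℕ :=
  ((T.neighborFinset v).filter fun u => T.degree u = 1).card

/-- In a tree of class 𝕋, every alternating path with respect to any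
maximum matching has length at most three. -/
lemma deg_ne_one' {V : Type*} [Fintype V] (T : SimpleGraph V) [DecidableRel T.Adj]
    {x a b : V} (h1 : T.Adj x a) (h2 : T.Adj x b) (hne : a ≠ b) : T.degree x ≠ 1 := by
  classical
  have hsub : ({a, b} : Finset V) ⊆ T.neighborFinset x := by
    intro y hy
    simp only [Finset.mem_insert, Finset.mem_singleton] at hy
    rcases hy with rfl | rfl <;> simp [mem_neighborFinset, h1, h2]
  have hc := Finset.card_le_card hsub
  rw [Finset.card_insert_of_notMem (by simp [hne]), Finset.card_singleton] at hc
  have : T.degree x = (T.neighborFinset x).card := rfl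
  omega

-- pendant vertex p adjacent to a: its only neighbor is a
lemma pendant_nbr_eq {V : Type*} [Fintype V] (T : SimpleGraph V) [DecidableRel T.Adj]
    {p a z : V} (hp : T.degree p = 1) (h1 : T.Adj p a) (h2 : T.Adj p z) : z = a := by
  by_contra hne
  exact deg_ne_one' T h2 h1 hne hp

lemma keyA {V : Type*} [Fintype V] (T : SimpleGraph V) [DecidableRel T.Adj]
    (hT : InClassT T) (M : Finset (Sym2 V)) (hM : IsMaxMatching T M)
    {a b : V} (hab : s(a, b) ∈ M) (ha : T.degree a ≠ 1) (hb : T.degree b ≠ 1) : False := by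
  classical
  obtain ⟨_, _, hpend⟩ := hT
  obtain ⟨⟨hsub, hdisj⟩, hmax⟩ := hM
  have hadj : T.Adj a b := (mem_edgeSet T).1 (hsub (Finset.mem_coe.2 hab))
  obtain ⟨p, hpa, hp1⟩ := hpend a ha
  obtain ⟨q, hqb, hq1⟩ := hpend b hb
  have hab' : a ≠ b := hadj.ne
  have hpa' : p ≠ a := hpa.ne'
  have hqb' : q ≠ b := hqb.ne'
  have hpb : p ≠ b := fun h => hb (h ▸ hp1)
  have hqa : q ≠ a := fun h => ha (h ▸ hq1)
  have hpq : p ≠ q := by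
    rintro rfl
    exact hab' (pendant_nbr_eq T hp1 hpa.symm hqb.symm).symm
  -- p is unmatched
  have hpun : ∀ e ∈ M, p ∉ e := by
    intro e he hpe
    induction e using Sym2.ind with
    | _ x y =>
      have hxy : T.Adj x y := (mem_edgeSet T).1 (hsub (Finset.mem_coe.2 he))
      have hepa : s(x, y) = s(p, a) := by
        rcases Sym2.mem_iff.1 hpe with rfl | rfl
        · rw [pendant_nbr_eq T hp1 (hpa.symm) hxy]
        · rw [pendant_nbr_eq T hp1 (hpa.symm) hxy.symm, Sym2.eq_swap]
      rw [hepa] at he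
      have hne : s(p, a) ≠ s(a, b) := by
        intro h
        rcases Sym2.eq_iff.1 h with ⟨h1, _⟩ | ⟨h1, _⟩
        · exact hpa' h1
        · exact hpb h1
      exact hdisj _ he _ hab hne a ⟨Sym2.mem_mk_right p a, Sym2.mem_mk_left a b⟩
  have hqun : ∀ e ∈ M, q ∉ e := by
    intro e he hqe
    induction e using Sym2.ind with
    | _ x y =>
      have hxy : T.Adj x y := (mem_edgeSet T).1 (hsub (Finset.mem_coe.2 he))
      have heqb : s(x, y) = s(q, b) := by
        rcases Sym2.mem_iff.1 hqe with rfl | rfl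
        · rw [pendant_nbr_eq T hq1 (hqb.symm) hxy]
        · rw [pendant_nbr_eq T hq1 (hqb.symm) hxy.symm, Sym2.eq_swap]
      rw [heqb] at he
      have hne : s(q, b) ≠ s(a, b) := by
        intro h
        rcases Sym2.eq_iff.1 h with ⟨h1, _⟩ | ⟨h1, _⟩
        · exact hqa h1
        · exact hqb' h1
      exact hdisj _ he _ hab hne b ⟨Sym2.mem_mk_right q b, Sym2.mem_mk_right a b⟩
  -- the augmented matching
  set N : Finset (Sym2 V) := insert s(p, a) (insert s(q, b) (M.erase s(a, b))) with hN
  have hmemN : ∀ e, e ∈ N ↔ e = s(p, a) ∨ e = s(q, b) ∨ (e ∈ M ∧ e ≠ s(a, b)) := by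
    intro e
    simp [hN, Finset.mem_insert, Finset.mem_erase, and_comm]
  have hNsub : (↑N : Set (Sym2 V)) ⊆ T.edgeSet := by
    intro e he
    rcases (hmemN e).1 (Finset.mem_coe.1 he) with rfl | rfl | ⟨he', _⟩
    · exact (mem_edgeSet T).2 hpa.symm
    · exact (mem_edgeSet T).2 hqb.symm
    · exact hsub (Finset.mem_coe.2 he')
  have hNdisj : ∀ e ∈ N, ∀ f ∈ N, e ≠ f → ∀ w : V, ¬(w ∈ e ∧ w ∈ f) := by
    have aux1 : ∀ f ∈ M, f ≠ s(a, b) → ∀ w : V, w ∈ (s(p, a) : Sym2 V) → w ∈ f → False := by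
      intro f hf hfne w hw1 hw2
      rcases Sym2.mem_iff.1 hw1 with h | h
      · exact hpun f hf (h ▸ hw2)
      · exact hdisj f hf _ hab hfne w ⟨hw2, h ▸ Sym2.mem_mk_left a b⟩
    have aux2 : ∀ f ∈ M, f ≠ s(a, b) → ∀ w : V, w ∈ (s(q, b) : Sym2 V) → w ∈ f → False := by
      intro f hf hfne w hw1 hw2
      rcases Sym2.mem_iff.1 hw1 with h | h
      · exact hqun f hf (h ▸ hw2)
      · exact hdisj f hf _ hab hfne w ⟨hw2, h ▸ Sym2.mem_mk_right a b⟩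
    have aux3 : ∀ w : V, w ∈ (s(p, a) : Sym2 V) → w ∈ (s(q, b) : Sym2 V) → False := by
      intro w hw1 hw2
      rcases Sym2.mem_iff.1 hw1 with rfl | rfl <;> rcases Sym2.mem_iff.1 hw2 with h | h
      · exact hpq h
      · exact hpb h
      · exact hqa h.symm
      · exact hab' h
    intro e he f hf hef w ⟨hwe, hwf⟩
    rcases (hmemN e).1 he with rfl | rfl | ⟨he', hene⟩ <;>
      rcases (hmemN f).1 hf with rfl | rfl | ⟨hf', hfne⟩
    · exact hef rfl
    · exact aux3 w hwe hwf
    · exact aux1 f hf' hfne w hwe hwf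
    · exact aux3 w hwf hwe
    · exact hef rfl
    · exact aux2 f hf' hfne w hwe hwf
    · exact aux1 e he' hene w hwf hwe
    · exact aux2 e he' hene w hwf hwe
    · exact hdisj e he' f hf' hef w ⟨hwe, hwf⟩
  have hcard : M.card + 1 ≤ N.card := by
    have h1 : s(q, b) ∉ M.erase s(a, b) := fun h =>
      hqun _ (Finset.mem_of_mem_erase h) (Sym2.mem_mk_left q b)
    have h2 : s(p, a) ∉ insert s(q, b) (M.erase s(a, b)) := by
      intro h
      rcases Finset.mem_insert.1 h with h | h
      · rcases Sym2.eq_iff.1 h with ⟨h', _⟩ | ⟨h', _⟩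
        · exact hpq h'
        · exact hpb h'
      · exact hpun _ (Finset.mem_of_mem_erase h) (Sym2.mem_mk_left p a)
    rw [hN, Finset.card_insert_of_notMem h2, Finset.card_insert_of_notMem h1,
      Finset.card_erase_of_mem hab]
    have : 1 ≤ M.card := Finset.card_pos.2 ⟨_, hab⟩
    omega
  have := hmax N ⟨hNsub, hNdisj⟩
  omega

theorem classT_alternating_path_length_le_three {V : Type*} [Fintype V]
    (T : SimpleGraph V) [DecidableRel T.Adj] (hT : InClassT T) :
    ∀ M : Finset (Sym2 V), IsMaxMatching T M →
      ∀ (u v : V) (p : T.Walk u v), p.IsPath →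
        IsAltEdgeList (↑M) p.edges → p.length ≤ 3 := by
  intro M hM u v p hp halt
  cases p with
  | nil => simp
  | cons h1 p1 =>
    cases p1 with
    | nil => simp
    | cons h2 p2 =>
      cases p2 with
      | nil => simp [Walk.length_cons]
      | cons h3 p3 =>
        cases p3 with
        | nil => simp [Walk.length_cons]
        | cons h4 p4 =>
          exfalso
          rename_i b c d e
          rw [Walk.edges_cons, Walk.edges_cons, Walk.edges_cons, Walk.edges_cons] at halt
          obtain ⟨-, -, h3M, -, -⟩ := halt
          have h3M' : s(c, d) ∈ M := Finset.mem_coe.1 h3M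
          have hsup := hp.support_nodup
          simp only [Walk.support_cons, List.nodup_cons, List.mem_cons] at hsup
          obtain ⟨-, hb, hc, -, -⟩ := hsup
          have hbd : b ≠ d := fun h => hb (Or.inr (Or.inl h))
          have hce : c ≠ e := by
            intro h
            exact hc (Or.inr (h ▸ p4.start_mem_support))
          exact keyA T hT M hM h3M' (deg_ne_one' T h2.symm h3 hbd)
            (deg_ne_one' T h3.symm h4 hce)
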